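/- Let p₁,…,p_d be positive integers with p_d ≥ 2, α = p₁+⋯+p_{d−1}, k = ⌊(p_d−2)/(α+1)⌋, and suppose p_d ≥ α²−α. Then ls_□(T_{p₁…p_d}) = k+2. -/

import Mathlib

open scoped BigOperators

/-- Lattice width of a set `P ⊆ ℝ^d` in direction `h`:
`max_{x∈P} ⟨h,x⟩ − min_{x∈P} ⟨h,x⟩`. -/
noncomputable def width {d : ℕ} (P : Set (Fin d → ℝ)) (h : Fin d → ℝ) : ℝ :=
  sSup ((fun x => ∑ i, h i * x i) '' P) - sInf ((fun x => ∑ i, h i * x i) '' P)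

/-- `l₁(P) = max_{x∈P}(x₁+⋯+x_d) − Σᵢ min_{x∈P} xᵢ`. -/
noncomputable def l1 {d : ℕ} (P : Set (Fin d → ℝ)) : ℝ :=
  sSup ((fun x => ∑ i, x i) '' P) - ∑ i, sInf ((fun x => x i) '' P)

/-- `P` is a lattice polytope: the convex hull of a nonempty finite set of integer points. -/
def IsLatticePolytope {d : ℕ} (P : Set (Fin d → ℝ)) : Prop :=
  ∃ V : Finset (Fin d → ℝ), V.Nonempty ∧ (∀ v ∈ V, ∀ i, ∃ m : ℤ, v i = (m : ℝ)) ∧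
    P = convexHull ℝ (V : Set (Fin d → ℝ))

/-- `P` is a polytope: the convex hull of a nonempty finite set of points. -/
def IsPolytope {d : ℕ} (P : Set (Fin d → ℝ)) : Prop :=
  ∃ V : Finset (Fin d → ℝ), V.Nonempty ∧ P = convexHull ℝ (V : Set (Fin d → ℝ))

/-- The `i`-th standard basis vector of `ℝ^d`. -/
def stdVert (d : ℕ) (i : Fin d) : Fin d → ℝ := fun j => if j = i then 1 else 0

/-- The extra vertex `(p₁, …, pₙ, q, 1) ∈ ℝ^{n+2}`. -/
def Tvert (n : ℕ) (p : Fin n → ℤ) (q : ℤ) : Fin (n + 2) → ℝ :=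
  fun j => if h : (j : ℕ) < n then (p ⟨j, h⟩ : ℝ) else if (j : ℕ) = n then (q : ℝ) else 1

/-- The simplex `T_{p₁…p_{n} q} = conv{e₁,…,e_{n+2}, (p₁,…,pₙ,q,1)} ⊆ ℝ^{n+2}`. -/
noncomputable def Tsimp (n : ℕ) (p : Fin n → ℤ) (q : ℤ) : Set (Fin (n + 2) → ℝ) :=
  convexHull ℝ (insert (Tvert n p q) (Set.range (stdVert (n + 2))))

/-- Lattice size of `P` with respect to the standard simplex: the smallest `l` such that an
affine unimodular map sends `P` into `lΔ`. -/
noncomputable def lsSimplex {d : ℕ} (P : Set (Fin d → ℝ)) : ℕ :=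
  sInf {l : ℕ | ∃ (A : Matrix (Fin d) (Fin d) ℤ) (v : Fin d → ℤ),
    (A.det = 1 ∨ A.det = -1) ∧
    ∀ x ∈ P, (∀ i, (0 : ℝ) ≤ (A.map (fun m : ℤ => (m : ℝ))).mulVec x i + (v i : ℝ)) ∧
      ∑ i, ((A.map (fun m : ℤ => (m : ℝ))).mulVec x i + (v i : ℝ)) ≤ (l : ℝ)}

/-- Lattice size of `P` with respect to the unit cube: the smallest `l` such that an
affine unimodular map sends `P` into `[0,l]^d`. -/
noncomputable def lsCube {d : ℕ} (P : Set (Fin d → ℝ)) : ℕ :=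
  sInf {l : ℕ | ∃ (A : Matrix (Fin d) (Fin d) ℤ) (v : Fin d → ℤ),
    (A.det = 1 ∨ A.det = -1) ∧
    ∀ x ∈ P, ∀ i, (0 : ℝ) ≤ (A.map (fun m : ℤ => (m : ℝ))).mulVec x i + (v i : ℝ) ∧
      (A.map (fun m : ℤ => (m : ℝ))).mulVec x i + (v i : ℝ) ≤ (l : ℝ)}


namespace LsAuxT

/-- Integer version of the extra vertex. -/
def Uvec (n : ℕ) (p : Fin n → ℤ) (q : ℤ) : Fin (n + 2) → ℤ :=
  fun j => if h : (j : ℕ) < n then p ⟨j, h⟩ else if (j : ℕ) = n then q else 1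

lemma Tvert_eq (n : ℕ) (p : Fin n → ℤ) (q : ℤ) :
    Tvert n p q = fun j => ((Uvec n p q j : ℤ) : ℝ) := by
  funext j
  unfold Tvert Uvec
  split_ifs <;> simp

lemma Uvec_lt (n : ℕ) (p : Fin n → ℤ) (q : ℤ) (i : Fin n) :
    Uvec n p q ⟨i.1, by omega⟩ = p i := by
  simp [Uvec, i.isLt]

lemma Uvec_mid (n : ℕ) (p : Fin n → ℤ) (q : ℤ) :
    Uvec n p q ⟨n, by omega⟩ = q := by
  simp [Uvec]

lemma Uvec_top (n : ℕ) (p : Fin n → ℤ) (q : ℤ) :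
    Uvec n p q ⟨n+1, by omega⟩ = 1 := by
  simp [Uvec]

lemma sum_split {M : Type*} [AddCommMonoid M] (n : ℕ) (f : Fin (n+2) → M) :
    ∑ j, f j = (∑ i : Fin n, f ⟨i.1, by omega⟩) + f ⟨n, by omega⟩ + f ⟨n+1, by omega⟩ := by
  rw [Fin.sum_univ_castSucc, Fin.sum_univ_castSucc]; rfl

/-- The nilpotent part of the unimodular matrix used for the upper bound. -/
def matN (n : ℕ) (k c : ℤ) : Matrix (Fin (n+2)) (Fin (n+2)) ℤ :=
  Matrix.of fun j i => if (j:ℕ) = n ∧ ¬ (i:ℕ) = n then (if (i:ℕ) < n then -(k+1) else c) else 0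

lemma matA_apply (n : ℕ) (k c : ℤ) (j i : Fin (n+2)) :
    (1 + matN n k c) j i =
      if (j:ℕ) = n then (if (i:ℕ) < n then -(k+1) else if (i:ℕ) = n then 1 else c)
      else (if j = i then 1 else 0) := by
  have hij : (j = i) ↔ (j:ℕ) = (i:ℕ) := Fin.ext_iff
  simp only [Matrix.add_apply, Matrix.one_apply, matN, Matrix.of_apply]
  by_cases hj : (j:ℕ) = n
  · rw [if_pos hj]
    by_cases hi : (i:ℕ) = n
    · have hji : j = i := hij.mpr (by omega)
      rw [if_pos hji, if_neg (fun h => h.2 hi), add_zero,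
        if_neg (show ¬ (i:ℕ) < n by omega), if_pos hi]
    · have hji : ¬ j = i := fun h => hi (by rw [← hij.mp h]; exact hj)
      rw [if_neg hji, if_pos (⟨hj, hi⟩ : (j:ℕ) = n ∧ ¬ (i:ℕ) = n), zero_add]
      by_cases hilt : (i:ℕ) < n
      · rw [if_pos hilt, if_pos hilt]
      · rw [if_neg hilt, if_neg hilt, if_neg hi]
  · have h2 : ¬ ((j:ℕ) = n ∧ ¬ (i:ℕ) = n) := fun h => hj h.1
    rw [if_neg hj, if_neg h2, add_zero]

lemma matN_sq (n : ℕ) (k c : ℤ) : matN n k c * matN n k c = 0 := by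
  ext j i
  simp only [Matrix.mul_apply, matN, Matrix.of_apply, Matrix.zero_apply]
  apply Finset.sum_eq_zero
  intro l _
  rcases Decidable.em ((l:ℕ) = n ∧ ¬ (i:ℕ) = n) with h2 | h2
  · rcases Decidable.em ((j:ℕ) = n ∧ ¬ (l:ℕ) = n) with h1 | h1
    · exact absurd h2.1 h1.2
    · rw [if_neg h1, zero_mul]
  · rw [if_neg h2, mul_zero]

lemma matA_unit (n : ℕ) (k c : ℤ) :
    ((1 : Matrix (Fin (n+2)) (Fin (n+2)) ℤ) + matN n k c).det = 1 ∨
    ((1 : Matrix (Fin (n+2)) (Fin (n+2)) ℤ) + matN n k c).det = -1 := by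
  have hAB : ((1 : Matrix (Fin (n+2)) (Fin (n+2)) ℤ) + matN n k c) * (1 - matN n k c) = 1 := by
    have h2 : ((1 : Matrix (Fin (n+2)) (Fin (n+2)) ℤ) + matN n k c) * (1 - matN n k c)
        = 1 - matN n k c * matN n k c := by noncomm_ring
    rw [h2, matN_sq, sub_zero]
  have hu : IsUnit ((1 : Matrix (Fin (n+2)) (Fin (n+2)) ℤ) + matN n k c).det := by
    apply IsUnit.of_mul_eq_one (1 - matN n k c).det
    rw [← Matrix.det_mul, hAB, Matrix.det_one]
  exact Int.isUnit_iff.mp hu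

/-- `mulVec` of an integer matrix against a standard basis vector. -/
lemma mulVec_std (n : ℕ) (B : Matrix (Fin (n+2)) (Fin (n+2)) ℤ) (j i : Fin (n+2)) :
    (B.map (fun m : ℤ => (m : ℝ))).mulVec (stdVert (n+2) i) j = (B j i : ℝ) := by
  simp [Matrix.mulVec, dotProduct, stdVert, Matrix.map_apply, mul_ite]

/-- `mulVec` of an integer matrix against the extra vertex. -/
lemma mulVec_T (n : ℕ) (p : Fin n → ℤ) (q : ℤ) (B : Matrix (Fin (n+2)) (Fin (n+2)) ℤ)
    (j : Fin (n+2)) :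
    (B.map (fun m : ℤ => (m : ℝ))).mulVec (Tvert n p q) j
      = ((∑ i, B j i * Uvec n p q i : ℤ) : ℝ) := by
  rw [Tvert_eq]
  simp only [Matrix.mulVec, dotProduct, Matrix.map_apply]
  push_cast
  rfl

/-- The identity-row sum computation. -/
lemma sum_id_row (n : ℕ) (p : Fin n → ℤ) (q : ℤ) (j : Fin (n+2)) :
    (∑ i, (if j = i then (1:ℤ) else 0) * Uvec n p q i) = Uvec n p q j := by
  have h : ∀ i, (if j = i then (1:ℤ) else 0) * Uvec n p q i
      = (if j = i then Uvec n p q i else 0) := by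
    intro i
    by_cases hji : j = i
    · rw [if_pos hji, if_pos hji, one_mul]
    · rw [if_neg hji, if_neg hji, zero_mul]
  rw [Finset.sum_congr rfl fun i _ => h i, Finset.sum_ite_eq Finset.univ j
    (fun i => Uvec n p q i), if_pos (Finset.mem_univ j)]

end LsAuxT

set_option maxHeartbeats 1200000 in
open LsAuxT in
theorem lsCube_T_eq (n : ℕ) (p : Fin n → ℤ) (hp : ∀ i, 0 < p i) (q : ℤ) (hq : 2 ≤ q)
    (α k : ℤ) (hα : α = ∑ i, p i) (hk : k = (q - 2) / (α + 1)) (hbig : α ^ 2 - α ≤ q) :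
    (lsCube (Tsimp n p q) : ℤ) = k + 2 := by
  classical
  have hα0 : 0 ≤ α := by
    rw [hα]; exact Finset.sum_nonneg fun i _ => (hp i).le
  have hα1 : (0:ℤ) < α + 1 := by omega
  set r : ℤ := (q - 2) % (α + 1) with hr
  have hdiv : (α + 1) * k + r = q - 2 := by rw [hk, hr]; exact Int.mul_ediv_add_emod _ _
  have hr0 : 0 ≤ r := Int.emod_nonneg _ (by omega)
  have hr1 : r < α + 1 := Int.emod_lt_of_pos _ hα1
  have hk0 : 0 ≤ k := by rw [hk]; exact Int.ediv_nonneg (by omega) (by omega)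
  have hαk2 : α ≤ k + 2 := by
    by_contra h
    push_neg at h
    have h1 : k * (α + 1) ≤ (α - 3) * (α + 1) :=
      mul_le_mul_of_nonneg_right (by omega) (by omega)
    nlinarith
  set K : ℕ := k.toNat with hKdef
  have hK : (K : ℤ) = k := Int.toNat_of_nonneg hk0
  have hple : ∀ i : Fin n, p i ≤ α := by
    intro i
    rw [hα]
    exact Finset.single_le_sum (fun i _ => (hp i).le) (Finset.mem_univ i)
  have hTs : Tsimp n p q = convexHull ℝ (insert (Tvert n p q) (Set.range (stdVert (n+2)))) :=
    rfl
  -- entries of the special matrix plus offset are within [0, k+2]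
  have hAv : ∀ j i : Fin (n+2),
      0 ≤ (1 + matN n k (α - r - (k+1))) j i + (if (j:ℕ) = n then k+1 else 0) ∧
      (1 + matN n k (α - r - (k+1))) j i + (if (j:ℕ) = n then k+1 else 0) ≤ k + 2 := by
    intro j i
    rw [matA_apply]
    by_cases hj : (j:ℕ) = n
    · rw [if_pos hj, if_pos hj]
      by_cases h1 : (i:ℕ) < n
      · rw [if_pos h1]; omega
      · rw [if_neg h1]
        by_cases h2 : (i:ℕ) = n
        · rw [if_pos h2]; omega
        · rw [if_neg h2]; omega
    · rw [if_neg hj, if_neg hj]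
      by_cases h1 : j = i
      · rw [if_pos h1]; omega
      · rw [if_neg h1]; omega
  -- row sums against the extra vertex are within [0, k+2]
  have hAu : ∀ j : Fin (n+2),
      0 ≤ (∑ i, (1 + matN n k (α - r - (k+1))) j i * Uvec n p q i)
          + (if (j:ℕ) = n then k+1 else 0) ∧
      (∑ i, (1 + matN n k (α - r - (k+1))) j i * Uvec n p q i)
          + (if (j:ℕ) = n then k+1 else 0) ≤ k + 2 := by
    intro j
    by_cases hj : (j:ℕ) = n
    · have hW : (∑ i, (1 + matN n k (α - r - (k+1))) j i * Uvec n p q i)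
          = -(k+1) * α + q + (α - r - (k+1)) := by
        rw [sum_split n (fun i => (1 + matN n k (α - r - (k+1))) j i * Uvec n p q i)]
        have e1 : ∀ i : Fin n,
            (1 + matN n k (α - r - (k+1))) j (⟨i.1, by omega⟩ : Fin (n+2))
              * Uvec n p q ⟨i.1, by omega⟩ = -(k+1) * p i := by
          intro i
          rw [matA_apply, if_pos hj, if_pos (show ((⟨i.1, by omega⟩ : Fin (n+2)) : ℕ) < n
            from i.isLt), Uvec_lt]
        have e2 : (1 + matN n k (α - r - (k+1))) j (⟨n, by omega⟩ : Fin (n+2))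
            * Uvec n p q ⟨n, by omega⟩ = q := by
          rw [matA_apply, if_pos hj, Uvec_mid,
            if_neg (show ¬ ((⟨n, by omega⟩ : Fin (n+2)) : ℕ) < n from Nat.lt_irrefl n),
            if_pos (show ((⟨n, by omega⟩ : Fin (n+2)) : ℕ) = n from rfl), one_mul]
        have e3 : (1 + matN n k (α - r - (k+1))) j (⟨n+1, by omega⟩ : Fin (n+2))
            * Uvec n p q ⟨n+1, by omega⟩ = α - r - (k+1) := by
          rw [matA_apply, if_pos hj, Uvec_top,
            if_neg (show ¬ ((⟨n+1, by omega⟩ : Fin (n+2)) : ℕ) < n from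
              (by omega : ¬ n + 1 < n)),
            if_neg (show ¬ ((⟨n+1, by omega⟩ : Fin (n+2)) : ℕ) = n from
              (by omega : ¬ n + 1 = n)), mul_one]
        rw [Finset.sum_congr rfl (fun i _ => e1 i), e2, e3, ← Finset.mul_sum, ← hα]
      rw [hW, if_pos hj]
      have hval : -(k+1) * α + q + (α - r - (k+1)) + (k+1) = k + 2 := by
        linear_combination -hdiv
      rw [hval]
      omega
    · have hW : (∑ i, (1 + matN n k (α - r - (k+1))) j i * Uvec n p q i)
          = Uvec n p q j := by
        have e : ∀ i, (1 + matN n k (α - r - (k+1))) j i = (if j = i then (1:ℤ) else 0) := by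
          intro i
          rw [matA_apply, if_neg hj]
        rw [Finset.sum_congr rfl (fun i _ => by rw [e i]), sum_id_row]
      rw [hW, if_neg hj, add_zero]
      unfold Uvec
      by_cases h1 : (j:ℕ) < n
      · simp only [dif_pos h1]
        exact ⟨(hp _).le, le_trans (hple _) (by omega)⟩
      · simp only [dif_neg h1, if_neg hj]
        omega
  -- the candidate value is attained
  set v₀ : Fin (n+2) → ℤ := fun j => if (j:ℕ) = n then k+1 else 0 with hv₀
  have hv₀j : ∀ j : Fin (n+2), v₀ j = if (j:ℕ) = n then k+1 else 0 := fun j => by rw [hv₀]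
  have hmemA : (K + 2 : ℕ) ∈ {l : ℕ | ∃ (A : Matrix (Fin (n+2)) (Fin (n+2)) ℤ)
      (v : Fin (n+2) → ℤ), (A.det = 1 ∨ A.det = -1) ∧
      ∀ x ∈ Tsimp n p q, ∀ i, (0 : ℝ) ≤ (A.map (fun m : ℤ => (m : ℝ))).mulVec x i + (v i : ℝ) ∧
        (A.map (fun m : ℤ => (m : ℝ))).mulVec x i + (v i : ℝ) ≤ (l : ℝ)} := by
    refine ⟨1 + matN n k (α - r - (k+1)), v₀, ?_, ?_⟩
    · exact matA_unit n k (α - r - (k+1))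
    · have hL : (((K + 2 : ℕ) : ℕ) : ℝ) = ((k + 2 : ℤ) : ℝ) := by
        rw [← hK]; push_cast; ring
      have hsub : Tsimp n p q ⊆ {x | ∀ j, (0 : ℝ) ≤
          ((1 + matN n k (α - r - (k+1))).map (fun m : ℤ => (m : ℝ))).mulVec x j
            + ((v₀ j : ℤ) : ℝ) ∧
          ((1 + matN n k (α - r - (k+1))).map (fun m : ℤ => (m : ℝ))).mulVec x j
            + ((v₀ j : ℤ) : ℝ) ≤ (((K + 2 : ℕ) : ℕ) : ℝ)} := by
        rw [hTs]
        apply convexHull_min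
        · intro y hy
          rcases Set.mem_insert_iff.mp hy with rfl | ⟨i, rfl⟩
          · intro j
            rw [mulVec_T, hL, hv₀j j]
            constructor
            · exact_mod_cast (hAu j).1
            · exact_mod_cast (hAu j).2
          · intro j
            rw [mulVec_std, hL, hv₀j j]
            constructor
            · exact_mod_cast (hAv j i).1
            · exact_mod_cast (hAv j i).2
        · intro x hx y hy a b ha hb hab j
          have h1 := hx j
          have h2 := hy j
          set M := (1 + matN n k (α - r - (k+1))).map (fun m : ℤ => (m : ℝ)) with hM
          set vr : ℝ := ((v₀ j : ℤ) : ℝ) with hvr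
          have hmv : M.mulVec (a • x + b • y) j = a * M.mulVec x j + b * M.mulVec y j := by
            rw [Matrix.mulVec_add, Matrix.mulVec_smul, Matrix.mulVec_smul]
            simp [smul_eq_mul]
          show (0:ℝ) ≤ M.mulVec (a • x + b • y) j + vr ∧ _
          rw [hmv]
          have e1 : a * (M.mulVec x j + vr) = a * M.mulVec x j + a * vr := by ring
          have e2 : b * (M.mulVec y j + vr) = b * M.mulVec y j + b * vr := by ring
          have e3 : a * vr + b * vr = vr := by rw [← add_mul, hab, one_mul]
          have p1 : 0 ≤ a * (M.mulVec x j + vr) := mul_nonneg ha h1.1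
          have p2 : 0 ≤ b * (M.mulVec y j + vr) := mul_nonneg hb h2.1
          have p3 : a * (M.mulVec x j + vr) ≤ a * (((K + 2 : ℕ) : ℕ) : ℝ) :=
            mul_le_mul_of_nonneg_left h1.2 ha
          have p4 : b * (M.mulVec y j + vr) ≤ b * (((K + 2 : ℕ) : ℕ) : ℝ) :=
            mul_le_mul_of_nonneg_left h2.2 hb
          have e4 : a * (((K + 2 : ℕ) : ℕ) : ℝ) + b * (((K + 2 : ℕ) : ℕ) : ℝ)
              = (((K + 2 : ℕ) : ℕ) : ℝ) := by rw [← add_mul, hab, one_mul]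
          constructor
          · linarith
          · linarith
      intro x hx i
      exact hsub hx i
  -- lower bound
  have hlow : ∀ m : ℕ, m ∈ {l : ℕ | ∃ (A : Matrix (Fin (n+2)) (Fin (n+2)) ℤ)
      (v : Fin (n+2) → ℤ), (A.det = 1 ∨ A.det = -1) ∧
      ∀ x ∈ Tsimp n p q, ∀ i, (0 : ℝ) ≤ (A.map (fun m : ℤ => (m : ℝ))).mulVec x i + (v i : ℝ) ∧
        (A.map (fun m : ℤ => (m : ℝ))).mulVec x i + (v i : ℝ) ≤ (l : ℝ)} →
      K + 2 ≤ m := by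
    intro m hm
    by_contra hlt
    push_neg at hlt
    have hmk : (m : ℤ) ≤ k + 1 := by
      have h1 : m ≤ K + 1 := by omega
      have h2 : (m : ℤ) ≤ (K : ℤ) + 1 := by exact_mod_cast h1
      omega
    obtain ⟨B, w, hdet, hcond⟩ := hm
    have hgen : ∀ y ∈ insert (Tvert n p q) (Set.range (stdVert (n+2))), y ∈ Tsimp n p q := by
      intro y hy
      rw [hTs]
      exact subset_convexHull ℝ _ hy
    have hE : ∀ j i : Fin (n+2), 0 ≤ B j i + w j ∧ B j i + w j ≤ (m:ℤ) := by
      intro j i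
      have hmem : stdVert (n+2) i ∈ Tsimp n p q :=
        hgen _ (Set.mem_insert_iff.mpr (Or.inr ⟨i, rfl⟩))
      have h := hcond _ hmem j
      rw [mulVec_std] at h
      constructor
      · exact_mod_cast h.1
      · exact_mod_cast h.2
    have hEU : ∀ j : Fin (n+2), 0 ≤ (∑ i, B j i * Uvec n p q i) + w j ∧
        (∑ i, B j i * Uvec n p q i) + w j ≤ (m:ℤ) := by
      intro j
      have hmem : Tvert n p q ∈ Tsimp n p q := hgen _ (Set.mem_insert _ _)
      have h := hcond _ hmem j
      rw [mulVec_T] at h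
      constructor
      · exact_mod_cast h.1
      · exact_mod_cast h.2
    have key : ∀ j : Fin (n+2), B j ⟨n, by omega⟩ = 0 := by
      intro j
      obtain ⟨g, b0, c0, hg, hb0, hc0⟩ : ∃ (g : Fin n → ℤ) (b0 c0 : ℤ),
          (∀ i : Fin n, B j (⟨i.1, by omega⟩ : Fin (n+2)) = g i) ∧
            B j (⟨n, by omega⟩ : Fin (n+2)) = b0 ∧
            B j (⟨n+1, by omega⟩ : Fin (n+2)) = c0 :=
        ⟨_, _, _, fun i => rfl, rfl, rfl⟩
      rw [hb0]
      have hWg : (∑ i, B j i * Uvec n p q i) = (∑ i : Fin n, g i * p i) + b0 * q + c0 := by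
        rw [sum_split n (fun i => B j i * Uvec n p q i), Uvec_mid, Uvec_top, mul_one, hb0, hc0]
        congr 1
        congr 1
        exact Finset.sum_congr rfl fun i _ => by rw [Uvec_lt, hg]
      have hgb : ∀ i : Fin n, g i - b0 ≤ k + 1 ∧ -(k+1) ≤ g i - b0 := by
        intro i
        have h1 := hE j ⟨i.1, by omega⟩
        have h2 := hE j ⟨n, by omega⟩
        rw [hg i] at h1
        rw [hb0] at h2
        constructor
        · linarith
        · linarith
      have habs : ∀ i : Fin n, (g i - b0) * p i ≤ (k+1) * p i ∧
          -((k+1) * p i) ≤ (g i - b0) * p i := by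
        intro i
        constructor
        · exact mul_le_mul_of_nonneg_right (hgb i).1 (hp i).le
        · calc -((k+1) * p i) = (-(k+1)) * p i := by ring
            _ ≤ _ := mul_le_mul_of_nonneg_right (hgb i).2 (hp i).le
      have hsum1 : (∑ i : Fin n, (g i - b0) * p i) ≤ (k+1) * α := by
        calc (∑ i : Fin n, (g i - b0) * p i)
            ≤ ∑ i : Fin n, (k+1) * p i := Finset.sum_le_sum fun i _ => (habs i).1
          _ = (k+1) * α := by rw [← Finset.mul_sum, ← hα]
      have hsum2 : -((k+1) * α) ≤ (∑ i : Fin n, (g i - b0) * p i) := by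
        have e : (∑ i : Fin n, -((k+1) * p i)) = -((k+1) * α) := by
          rw [Finset.sum_neg_distrib, ← Finset.mul_sum, ← hα]
        calc -((k+1) * α) = ∑ i : Fin n, -((k+1) * p i) := e.symm
          _ ≤ _ := Finset.sum_le_sum fun i _ => (habs i).2
      have hdecomp : (∑ i : Fin n, (g i - b0) * p i)
          = (∑ i : Fin n, g i * p i) - b0 * α := by
        have h1 : (∑ i : Fin n, (g i - b0) * p i)
            = (∑ i : Fin n, (g i * p i - b0 * p i)) :=
          Finset.sum_congr rfl fun i _ => by ring
        rw [h1, Finset.sum_sub_distrib, ← Finset.mul_sum, ← hα]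
      have hWc : -(k+1) ≤ (∑ i : Fin n, g i * p i) + b0 * q ∧
          (∑ i : Fin n, g i * p i) + b0 * q ≤ k + 1 := by
        have h1 := hEU j
        have h2 := hE j ⟨n+1, by omega⟩
        rw [hWg] at h1
        rw [hc0] at h2
        constructor
        · linarith
        · linarith
      have hbbb : -((k+1)*(α+1)) ≤ b0 * (α + q) ∧ b0 * (α + q) ≤ (k+1)*(α+1) := by
        have e : b0 * (α + q) = ((∑ i : Fin n, g i * p i) + b0 * q)
            - (∑ i : Fin n, (g i - b0) * p i) := by
          rw [hdecomp]; ring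
        constructor
        · rw [e]; nlinarith [hWc.1, hsum1]
        · rw [e]; nlinarith [hWc.2, hsum2]
      have hkq : (k+1)*(α+1) ≤ q + α - 1 := by nlinarith [hdiv, hr0]
      by_contra hbne
      rcases lt_or_gt_of_ne hbne with hneg | hpos
      · have hle : b0 ≤ -1 := by omega
        have h5 : b0 * (α + q) ≤ (-1) * (α + q) :=
          mul_le_mul_of_nonneg_right hle (by omega)
        nlinarith [hbbb.1]
      · have hle : (1:ℤ) ≤ b0 := by omega
        have h5 : (1:ℤ) * (α + q) ≤ b0 * (α + q) :=
          mul_le_mul_of_nonneg_right hle (by omega)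
        nlinarith [hbbb.2]
    have hzero : B.det = 0 :=
      Matrix.det_eq_zero_of_column_eq_zero ⟨n, by omega⟩ key
    rcases hdet with h | h <;> rw [hzero] at h <;> omega
  have hfin : lsCube (Tsimp n p q) = K + 2 := by
    unfold lsCube
    refine le_antisymm (Nat.sInf_le hmemA) ?_
    exact hlow _ (Nat.sInf_mem ⟨_, hmemA⟩)
  rw [hfin, ← hK]
  push_cast
  ring
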